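/- The number of 2D corner-polyominoes inscribed in a b×k rectangle equals 2·binomial(b+k-2, b-1) - 1 for all positive integers b, k. -/

import Mathlib

/-- Two unit cells of the plane are edge-adjacent. -/
def Adj2 (a b : ℕ × ℕ) : Prop :=
  (a.1 = b.1 ∧ (a.2 + 1 = b.2 ∨ b.2 + 1 = a.2)) ∨
  (a.2 = b.2 ∧ (a.1 + 1 = b.1 ∨ b.1 + 1 = a.1))

/-- A set of cells is (edge-)connected. -/
def Connected2 (P : Finset (ℕ × ℕ)) : Prop :=
  ∀ a ∈ P, ∀ b ∈ P,
    Relation.ReflTransGen (fun u v => u ∈ P ∧ v ∈ P ∧ Adj2 u v) a b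

/-- A set of cells is contained in a `b × k` rectangle and touches all four sides. -/
def Inscribed2 (b k : ℕ) (P : Finset (ℕ × ℕ)) : Prop :=
  (∀ c ∈ P, c.1 < b ∧ c.2 < k) ∧
  (∃ c ∈ P, c.1 = 0) ∧ (∃ c ∈ P, c.1 = b - 1) ∧
  (∃ c ∈ P, c.2 = 0) ∧ (∃ c ∈ P, c.2 = k - 1)

/-- A corner-polyomino: a minimal (area `b+k-1`) polyomino inscribed in a `b × k`
rectangle containing the corner cell `(0,0)`. -/
def CornerPoly (b k : ℕ) (P : Finset (ℕ × ℕ)) : Prop :=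
  P.Nonempty ∧ Connected2 P ∧ Inscribed2 b k P ∧ P.card = b + k - 1 ∧ (0, 0) ∈ P

instance (a b : ℕ × ℕ) : Decidable (Adj2 a b) := by unfold Adj2; infer_instance

namespace CP
/-- BFS layers -/
def layer (P : Finset (ℕ × ℕ)) (root : ℕ × ℕ) : ℕ → Finset (ℕ × ℕ)
  | 0 => {root}
  | n+1 => layer P root n ∪ P.filter (fun x => ∃ y ∈ layer P root n, Adj2 y x)

lemma layer_subset (P : Finset (ℕ × ℕ)) (root : ℕ × ℕ) (hr : root ∈ P) (n : ℕ) :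
    layer P root n ⊆ P := by
  induction n with
  | zero => simp [layer, hr]
  | succ n ih =>
    simp only [layer]
    intro x hx
    rcases Finset.mem_union.1 hx with h | h
    · exact ih h
    · exact (Finset.mem_filter.1 h).1

lemma exists_layer (P : Finset (ℕ × ℕ)) (hP : Connected2 P) (root : ℕ × ℕ) (hr : root ∈ P)
    (x : ℕ × ℕ) (hx : x ∈ P) : ∃ n, x ∈ layer P root n := by
  have h := hP root hr x hx
  induction h with
  | refl => exact ⟨0, by simp [layer]⟩
  | tail _ hstep ih =>
    obtain ⟨n, hn⟩ := ih hstep.1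
    exact ⟨n+1, by
      simp only [layer, Finset.mem_union, Finset.mem_filter]
      exact Or.inr ⟨hstep.2.1, _, hn, hstep.2.2⟩⟩

/-- Parent/rank structure from connectivity. -/
lemma exists_parent (P : Finset (ℕ × ℕ)) (hP : Connected2 P) (root : ℕ × ℕ) (hr : root ∈ P) :
    ∃ (par : ℕ × ℕ → ℕ × ℕ) (rk : ℕ × ℕ → ℕ),
      ∀ x ∈ P, x ≠ root → par x ∈ P ∧ Adj2 (par x) x ∧ rk (par x) < rk x := by
  classical
  set rk : ℕ × ℕ → ℕ := fun x => if h : ∃ n, x ∈ layer P root n then Nat.find h else 0 with hrk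
  have key : ∀ x ∈ P, x ≠ root → ∃ y, y ∈ P ∧ Adj2 y x ∧ rk y < rk x := by
    intro x hx hne
    have hex : ∃ n, x ∈ layer P root n := exists_layer P hP root hr x hx
    have hrkx : rk x = Nat.find hex := by simp [hrk, hex]
    have hxmem : x ∈ layer P root (Nat.find hex) := Nat.find_spec hex
    have hpos : Nat.find hex ≠ 0 := by
      intro h0
      rw [h0] at hxmem
      simp [layer] at hxmem
      exact hne hxmem
    obtain ⟨m, hm⟩ := Nat.exists_eq_succ_of_ne_zero hpos
    rw [hm] at hxmem
    simp only [layer, Finset.mem_union, Finset.mem_filter] at hxmem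
    rcases hxmem with h | ⟨_, y, hy, hadj⟩
    · exact absurd h (Nat.find_min hex (by omega))
    · refine ⟨y, layer_subset P root hr m hy, hadj, ?_⟩
      have hey : ∃ n, y ∈ layer P root n := ⟨m, hy⟩
      have : rk y = Nat.find hey := by simp [hrk, hey]
      rw [this, hrkx]
      have h1 : Nat.find hey ≤ m := Nat.find_min' hey hy
      omega
  refine ⟨fun x => if h : x ∈ P ∧ x ≠ root then Classical.choose (key x h.1 h.2) else root,
    rk, fun x hx hne => ?_⟩
  have h : x ∈ P ∧ x ≠ root := ⟨hx, hne⟩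
  simp only [dif_pos h]
  exact Classical.choose_spec (key x h.1 h.2)




/-- IVT for columns along a chain -/
lemma chain_col_ivt {P : Finset (ℕ × ℕ)} {a c : ℕ × ℕ}
    (h : Relation.ReflTransGen (fun u v => u ∈ P ∧ v ∈ P ∧ Adj2 u v) a c)
    (ha : a ∈ P) (j : ℕ) (h1 : a.2 ≤ j) (h2 : j ≤ c.2) : ∃ x ∈ P, x.2 = j := by
  induction h with
  | refl => exact ⟨a, ha, le_antisymm h1 h2⟩
  | @tail y c hyc hstep ih =>
    by_cases hy : j ≤ y.2
    · exact ih hy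
    · push_neg at hy
      refine ⟨c, hstep.2.1, ?_⟩
      rcases hstep.2.2 with ⟨_, h3 | h3⟩ | ⟨h3, _⟩ <;> omega

lemma chain_row_ivt {P : Finset (ℕ × ℕ)} {a c : ℕ × ℕ}
    (h : Relation.ReflTransGen (fun u v => u ∈ P ∧ v ∈ P ∧ Adj2 u v) a c)
    (ha : a ∈ P) (i : ℕ) (h1 : a.1 ≤ i) (h2 : i ≤ c.1) : ∃ x ∈ P, x.1 = i := by
  induction h with
  | refl => exact ⟨a, ha, le_antisymm h1 h2⟩
  | @tail y c hyc hstep ih =>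
    by_cases hy : i ≤ y.1
    · exact ih hy
    · push_neg at hy
      refine ⟨c, hstep.2.1, ?_⟩
      rcases hstep.2.2 with ⟨h3, _⟩ | ⟨_, h3 | h3⟩ <;> omega

/-- all columns occupied -/
lemma cols_occupied {P : Finset (ℕ × ℕ)} (hconn : Connected2 P)
    (h0 : ∃ c ∈ P, c.2 = 0) (h1 : ∃ c ∈ P, c.2 = k - 1) (j : ℕ) (hj : j < k) :
    ∃ x ∈ P, x.2 = j := by
  obtain ⟨a, ha, ha2⟩ := h0
  obtain ⟨c, hc, hc2⟩ := h1
  exact chain_col_ivt (hconn a ha c hc) ha j (by omega) (by omega)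

lemma rows_occupied {P : Finset (ℕ × ℕ)} (hconn : Connected2 P)
    (h0 : ∃ c ∈ P, c.1 = 0) (h1 : ∃ c ∈ P, c.1 = b - 1) (i : ℕ) (hi : i < b) :
    ∃ x ∈ P, x.1 = i := by
  obtain ⟨a, ha, ha2⟩ := h0
  obtain ⟨c, hc, hc2⟩ := h1
  exact chain_row_ivt (hconn a ha c hc) ha i (by omega) (by omega)

/-- a horizontal adjacency exists at every column cut -/
lemma cut_nonempty {P : Finset (ℕ × ℕ)} (hconn : Connected2 P)
    (h0 : ∃ c ∈ P, c.2 = 0) {j : ℕ} (hz : ∃ z ∈ P, j < z.2) :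
    ∃ i, (i, j) ∈ P ∧ (i, j + 1) ∈ P := by
  obtain ⟨a, ha, ha2⟩ := h0
  obtain ⟨z, hzP, hzj⟩ := hz
  have h := hconn a ha z hzP
  clear hzP
  induction h with
  | refl => omega
  | @tail y c hyc hstep ih =>
    by_cases hy : j < y.2
    · exact ih hy
    · push_neg at hy
      have hcc : c.2 = j + 1 ∧ y.2 = j ∧ y.1 = c.1 := by
        rcases hstep.2.2 with ⟨h3, h4 | h4⟩ | ⟨h3, _⟩ <;> omega
      exact ⟨y.1, by rw [← hcc.2.1]; exact hstep.1,
        by rw [hcc.2.2, ← hcc.1]; exact hstep.2.1⟩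


/-- Main counting lemma: in a minimal inscribed polyomino, every column is an interval. -/
lemma col_interval {b k : ℕ} {P : Finset (ℕ × ℕ)}
    (hconn : Connected2 P) (hroot : (0, 0) ∈ P)
    (hbound : ∀ c ∈ P, c.1 < b ∧ c.2 < k)
    (hrows : ∀ i < b, ∃ c ∈ P, c.1 = i)
    (hcols : ∀ j < k, ∃ c ∈ P, c.2 = j)
    (hcard : P.card = b + k - 1) :
    ∀ i1 i2 i j, (i1, j) ∈ P → (i2, j) ∈ P → i1 ≤ i → i ≤ i2 → (i, j) ∈ P := by
  classical
  have hb : 1 ≤ b := by have := (hbound _ hroot).1; omega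
  have hk : 1 ≤ k := by have := (hbound _ hroot).2; omega
  obtain ⟨par, rk, hpar⟩ := exists_parent P hconn (0, 0) hroot
  set Q := P.erase (0, 0) with hQ
  have hQcard : Q.card = b + k - 2 := by
    rw [hQ, Finset.card_erase_of_mem hroot, hcard]; omega
  have hQmem : ∀ x ∈ Q, x ∈ P ∧ x ≠ (0, 0) := by
    intro x hx; exact ⟨Finset.mem_of_mem_erase hx, Finset.ne_of_mem_erase hx⟩
  set Hs := Q.filter (fun x => (par x).1 = x.1) with hHs
  set Vs := Q.filter (fun x => ¬(par x).1 = x.1) with hVs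
  have hHV : Hs.card + Vs.card = b + k - 2 := by
    rw [hHs, hVs, Finset.card_filter_add_card_filter_not, hQcard]
  -- facts about Vs elements
  have hVfact : ∀ x ∈ Vs, x ∈ P ∧ x ≠ (0,0) ∧ (par x).2 = x.2 ∧
      ((par x).1 = x.1 + 1 ∨ x.1 = (par x).1 + 1) := by
    intro x hx
    rw [hVs, Finset.mem_filter] at hx
    obtain ⟨hxQ, hxne⟩ := hx
    obtain ⟨hxP, hxr⟩ := hQmem _ hxQ
    obtain ⟨_, hadj, _⟩ := hpar x hxP hxr
    refine ⟨hxP, hxr, ?_⟩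
    rcases hadj with ⟨h1, h2⟩ | ⟨h1, h2⟩
    · exact absurd h1 hxne
    · exact ⟨h1, by omega⟩
  have hHfact : ∀ x ∈ Hs, x ∈ P ∧ x ≠ (0,0) ∧ (par x).1 = x.1 ∧
      ((par x).2 = x.2 + 1 ∨ x.2 = (par x).2 + 1) := by
    intro x hx
    rw [hHs, Finset.mem_filter] at hx
    obtain ⟨hxQ, hxe⟩ := hx
    obtain ⟨hxP, hxr⟩ := hQmem _ hxQ
    obtain ⟨_, hadj, _⟩ := hpar x hxP hxr
    refine ⟨hxP, hxr, hxe, ?_⟩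
    rcases hadj with ⟨h1, h2⟩ | ⟨h1, h2⟩
    · omega
    · omega
  -- Step A : every column cut is crossed by a parent edge
  have hcutH : ∀ j, j + 1 < k → ∃ x ∈ Hs, min x.2 (par x).2 = j := by
    intro j hjk
    obtain ⟨z0, hz0P, hz0⟩ := hcols (j + 1) hjk
    suffices H : ∀ m, ∀ z ∈ P, j < z.2 → rk z ≤ m → ∃ x ∈ Hs, min x.2 (par x).2 = j by
      exact H (rk z0) z0 hz0P (by omega) le_rfl
    intro m
    induction m using Nat.strong_induction_on with
    | _ m ih =>
      intro z hz hjz hrkz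
      have hzne : z ≠ (0, 0) := by
        intro h; rw [h] at hjz; simp at hjz
      obtain ⟨hp1, hp2, hp3⟩ := hpar z hz hzne
      by_cases hc : j < (par z).2
      · exact ih (rk (par z)) (by omega) (par z) hp1 hc le_rfl
      · push_neg at hc
        have hfst : (par z).1 = z.1 ∧ (par z).2 = j ∧ z.2 = j + 1 := by
          rcases hp2 with ⟨h1, h2⟩ | ⟨h1, h2⟩ <;> omega
        refine ⟨z, ?_, by omega⟩
        rw [hHs, Finset.mem_filter]
        exact ⟨Finset.mem_erase.2 ⟨hzne, hz⟩, hfst.1⟩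
  -- Step A' : every row cut is crossed by a parent edge
  have hcutV : ∀ i, i + 1 < b → ∃ x ∈ Vs, min x.1 (par x).1 = i := by
    intro i hib
    obtain ⟨z0, hz0P, hz0⟩ := hrows (i + 1) hib
    suffices H : ∀ m, ∀ z ∈ P, i < z.1 → rk z ≤ m → ∃ x ∈ Vs, min x.1 (par x).1 = i by
      exact H (rk z0) z0 hz0P (by omega) le_rfl
    intro m
    induction m using Nat.strong_induction_on with
    | _ m ih =>
      intro z hz hjz hrkz
      have hzne : z ≠ (0, 0) := by
        intro h; rw [h] at hjz; simp at hjz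
      obtain ⟨hp1, hp2, hp3⟩ := hpar z hz hzne
      by_cases hc : i < (par z).1
      · exact ih (rk (par z)) (by omega) (par z) hp1 hc le_rfl
      · push_neg at hc
        have hfst : (par z).2 = z.2 ∧ (par z).1 = i ∧ z.1 = i + 1 := by
          rcases hp2 with ⟨h1, h2⟩ | ⟨h1, h2⟩ <;> omega
        refine ⟨z, ?_, by omega⟩
        rw [hVs, Finset.mem_filter]
        exact ⟨Finset.mem_erase.2 ⟨hzne, hz⟩, by omega⟩
  -- lower bounds
  have hHge : k - 1 ≤ Hs.card := by
    have : ∀ j ∈ Finset.range (k - 1), ∃ x ∈ Hs, min x.2 (par x).2 = j := by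
      intro j hj; exact hcutH j (by simp at hj; omega)
    classical
    set g : ℕ → ℕ × ℕ := fun j =>
      if h : ∃ x ∈ Hs, min x.2 (par x).2 = j then h.choose else (0, 0) with hg
    have hspec : ∀ j ∈ Finset.range (k - 1), g j ∈ Hs ∧ min (g j).2 (par (g j)).2 = j := by
      intro j hj
      obtain h := this j hj
      rw [hg]; simp only [dif_pos h]
      exact ⟨h.choose_spec.1, h.choose_spec.2⟩
    calc k - 1 = (Finset.range (k - 1)).card := by simp
    _ ≤ Hs.card := Finset.card_le_card_of_injOn g
        (fun j hj => (hspec j hj).1)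
        (fun j hj j' hj' heq => by
          have h1 := (hspec j hj).2
          have h2 := (hspec j' hj').2
          rw [heq] at h1; omega)
  have hVge : b - 1 ≤ Vs.card := by
    have : ∀ i ∈ Finset.range (b - 1), ∃ x ∈ Vs, min x.1 (par x).1 = i := by
      intro i hi; exact hcutV i (by simp at hi; omega)
    classical
    set g : ℕ → ℕ × ℕ := fun i =>
      if h : ∃ x ∈ Vs, min x.1 (par x).1 = i then h.choose else (0, 0) with hg
    have hspec : ∀ i ∈ Finset.range (b - 1), g i ∈ Vs ∧ min (g i).1 (par (g i)).1 = i := by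
      intro i hi
      obtain h := this i hi
      rw [hg]; simp only [dif_pos h]
      exact ⟨h.choose_spec.1, h.choose_spec.2⟩
    calc b - 1 = (Finset.range (b - 1)).card := by simp
    _ ≤ Vs.card := Finset.card_le_card_of_injOn g
        (fun i hi => (hspec i hi).1)
        (fun i hi i' hi' heq => by
          have h1 := (hspec i hi).2
          have h2 := (hspec i' hi').2
          rw [heq] at h1; omega)
  -- fiberwise decomposition of Vs over columns
  set D : ℕ → Finset ℕ := fun j => (Finset.range b).filter (fun i => (i, j) ∈ P ∧ (i+1, j) ∈ P) with hD
  set col : ℕ → Finset (ℕ × ℕ) := fun j => P.filter (fun c => c.2 = j) with hcol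
  have hVsum : Vs.card = ∑ j ∈ Finset.range k, (Vs.filter (fun x => x.2 = j)).card := by
    apply Finset.card_eq_sum_card_fiberwise
    intro x hx
    exact Finset.mem_range.2 (hbound x (hVfact x hx).1).2
  have hVD : ∀ j ∈ Finset.range k, (Vs.filter (fun x => x.2 = j)).card ≤ (D j).card := by
    intro j _
    apply Finset.card_le_card_of_injOn (fun x => min x.1 (par x).1)
    · intro x hx
      rw [Finset.mem_coe, Finset.mem_filter] at hx
      obtain ⟨hxV, hxj⟩ := hx
      obtain ⟨hxP, hxne, hsnd, hor⟩ := hVfact x hxV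
      obtain ⟨hp1, _, _⟩ := hpar x hxP hxne
      have ex : (x.1, j) = x := Prod.ext rfl (by omega)
      have ep : ((par x).1, j) = par x := Prod.ext rfl (by omega)
      rw [hD]
      simp only [Finset.mem_coe, Finset.mem_filter, Finset.mem_range]
      rcases hor with h | h
      · have e2 : (x.1 + 1, j) = par x := Prod.ext (by simpa using h.symm) (by simp; omega)
        rw [min_eq_left (by omega)]
        exact ⟨by have := (hbound x hxP).1; omega, by rw [ex]; exact hxP,
          by rw [e2]; exact hp1⟩
      · have e2 : ((par x).1 + 1, j) = x := Prod.ext (by simpa using h.symm) (by simp; omega)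
        rw [min_eq_right (by omega)]
        exact ⟨by have := (hbound _ hp1).1; omega, by rw [ep]; exact hp1,
          by rw [e2]; exact hxP⟩
    · intro x hx y hy heq
      rw [Finset.mem_coe, Finset.mem_filter] at hx hy
      obtain ⟨hxV, hxj⟩ := hx
      obtain ⟨hyV, hyj⟩ := hy
      obtain ⟨hxP, hxne, hxsnd, hxor⟩ := hVfact x hxV
      obtain ⟨hyP, hyne, hysnd, hyor⟩ := hVfact y hyV
      obtain ⟨_, _, hxrk⟩ := hpar x hxP hxne
      obtain ⟨_, _, hyrk⟩ := hpar y hyP hyne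
      by_contra hne
      have hxy1 : x.1 ≠ y.1 := fun h => hne (Prod.ext h (by omega))
      have hpxy : par x = y := by
        rcases hxor with h | h <;> rcases hyor with h' | h' <;>
          exact Prod.ext (by simp only [min_def] at heq; split at heq <;> split at heq <;> omega)
            (by omega)
      have hpyx : par y = x := by
        rcases hxor with h | h <;> rcases hyor with h' | h' <;>
          exact Prod.ext (by simp only [min_def] at heq; split at heq <;> split at heq <;> omega)
            (by omega)
      rw [hpxy] at hxrk
      rw [hpyx] at hyrk
      omega
  -- D j is small : D j + 1 ≤ col j
  have hDcol : ∀ j ∈ Finset.range k, (D j).card + 1 ≤ (col j).card := by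
    intro j hj
    have hcne : (col j).Nonempty := by
      obtain ⟨c, hc, hc2⟩ := hcols j (Finset.mem_range.1 hj)
      exact ⟨c, by rw [hcol]; exact Finset.mem_filter.2 ⟨hc, hc2⟩⟩
    set rowsj := (col j).image Prod.fst with hrowsj
    have hrne : rowsj.Nonempty := hcne.image _
    set M := rowsj.min' hrne with hM
    have hMmem : (M, j) ∈ col j := by
      obtain ⟨c, hc, hc1⟩ := Finset.mem_image.1 (rowsj.min'_mem hrne)
      have : c = (M, j) := Prod.ext hc1 ((Finset.mem_filter.1 hc).2)
      rw [← this]; exact hc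
    have : (D j).card ≤ ((col j).erase (M, j)).card := by
      apply Finset.card_le_card_of_injOn (fun i => (i + 1, j))
      · intro i hi
        rw [hD] at hi
        simp only [Finset.mem_coe, Finset.mem_filter, Finset.mem_range] at hi
        apply Finset.mem_erase.2
        constructor
        · intro h
          have h1 : i + 1 = M := by
            have := congrArg Prod.fst h; simpa using this
          have : i ∈ rowsj := Finset.mem_image.2 ⟨(i, j),
            Finset.mem_filter.2 ⟨hi.2.1, rfl⟩, rfl⟩
          have := Finset.min'_le _ _ this
          omega
        · exact Finset.mem_filter.2 ⟨hi.2.2, rfl⟩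
      · intro i _ i' _ h
        simpa using congrArg Prod.fst h
    have := Finset.card_erase_of_mem hMmem
    have hcpos : 0 < (col j).card := Finset.card_pos.2 hcne
    omega
  have hcolsum : ∑ j ∈ Finset.range k, (col j).card = b + k - 1 := by
    rw [← hcard]
    symm
    apply Finset.card_eq_sum_card_fiberwise
    intro x hx
    exact Finset.mem_range.2 (hbound x hx).2
  -- now the equalities
  have hDsum : ∑ j ∈ Finset.range k, (D j).card ≤ b - 1 := by
    have h1 : ∑ j ∈ Finset.range k, ((D j).card + 1) ≤ ∑ j ∈ Finset.range k, (col j).card :=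
      Finset.sum_le_sum hDcol
    rw [Finset.sum_add_distrib, hcolsum] at h1
    simp at h1
    omega
  have hVD' : Vs.card ≤ ∑ j ∈ Finset.range k, (D j).card := by
    rw [hVsum]; exact Finset.sum_le_sum hVD
  have hVeq : Vs.card = b - 1 := by omega
  have hDeq : ∀ j ∈ Finset.range k, (D j).card + 1 = (col j).card := by
    have hsum_eq : ∑ j ∈ Finset.range k, ((D j).card + 1) = ∑ j ∈ Finset.range k, (col j).card := by
      rw [Finset.sum_add_distrib, hcolsum]
      simp
      omega
    intro j hj
    by_contra hne
    have hlt : (D j).card + 1 < (col j).card := lt_of_le_of_ne (hDcol j hj) hne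
    have := Finset.sum_lt_sum hDcol ⟨j, hj, hlt⟩
    omega
  -- Step D: extract interval property
  intro i1 i2 i j h1 h2 hle1 hle2
  have hjk : j < k := (hbound _ h1).2
  have hjr : j ∈ Finset.range k := Finset.mem_range.2 hjk
  set rowsj := (col j).image Prod.fst with hrowsj
  have hmemrow : ∀ i', i' ∈ rowsj ↔ (i', j) ∈ P := by
    intro i'
    constructor
    · intro h
      obtain ⟨c, hc, hc1⟩ := Finset.mem_image.1 h
      have : c = (i', j) := Prod.ext hc1 (Finset.mem_filter.1 hc).2
      rw [← this]; exact (Finset.mem_filter.1 hc).1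
    · intro h
      exact Finset.mem_image.2 ⟨(i', j), Finset.mem_filter.2 ⟨h, rfl⟩, rfl⟩
  have hrne : rowsj.Nonempty := ⟨i1, (hmemrow i1).2 h1⟩
  have hrcard : rowsj.card = (col j).card := by
    apply Finset.card_image_of_injOn
    intro c hc c' hc' hcc
    exact Prod.ext hcc ((Finset.mem_filter.1 hc).2.trans (Finset.mem_filter.1 hc').2.symm)
  set M := rowsj.max' hrne with hM
  have hDsub : D j ⊆ rowsj.erase M := by
    intro i' hi'
    rw [hD] at hi'
    simp only [Finset.mem_filter, Finset.mem_range] at hi'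
    have hm1 : i' ∈ rowsj := (hmemrow i').2 hi'.2.1
    have hm2 : i' + 1 ∈ rowsj := (hmemrow (i' + 1)).2 hi'.2.2
    have := Finset.le_max' _ _ hm2
    exact Finset.mem_erase.2 ⟨by omega, hm1⟩
  have hDfull : D j = rowsj.erase M := by
    apply Finset.eq_of_subset_of_card_le hDsub
    rw [Finset.card_erase_of_mem (rowsj.max'_mem hrne), hrcard]
    have := hDeq j hjr
    omega
  have hsucc : ∀ i', i' ∈ rowsj → i' ≠ M → i' + 1 ∈ rowsj := by
    intro i' hi' hne
    have : i' ∈ D j := by rw [hDfull]; exact Finset.mem_erase.2 ⟨hne, hi'⟩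
    rw [hD] at this
    simp only [Finset.mem_filter, Finset.mem_range] at this
    exact (hmemrow (i' + 1)).2 this.2.2
  have climb : ∀ d i', i' ∈ rowsj → i' + d ≤ M → i' + d ∈ rowsj := by
    intro d
    induction d with
    | zero => intro i' h _; simpa using h
    | succ d ih =>
      intro i' h hle
      have h1 : i' + d ∈ rowsj := ih i' h (by omega)
      have h2 : i' + d ≠ M := by omega
      have := hsucc _ h1 h2
      exact this
  have hi2M : i2 ≤ M := Finset.le_max' _ _ ((hmemrow i2).2 h2)
  have : i1 + (i - i1) ∈ rowsj := climb (i - i1) i1 ((hmemrow i1).2 h1) (by omega)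
  have : i ∈ rowsj := by convert this using 1; omega
  exact (hmemrow i).1 this

lemma adj2_symm {a b : ℕ × ℕ} (h : Adj2 a b) : Adj2 b a := by unfold Adj2 at *; tauto

lemma adj2_swap {a b : ℕ × ℕ} (h : Adj2 a b) : Adj2 a.swap b.swap := by
  unfold Adj2 at *; simp only [Prod.swap] at *; tauto

lemma connected2_image_swap {P : Finset (ℕ × ℕ)} (h : Connected2 P) :
    Connected2 (P.image Prod.swap) := by
  intro a ha b hb
  obtain ⟨a', ha', rfl⟩ := Finset.mem_image.1 ha
  obtain ⟨b', hb', rfl⟩ := Finset.mem_image.1 hb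
  refine Relation.ReflTransGen.lift Prod.swap ?_ _ _ (h a' ha' b' hb')
  rintro u v ⟨h1, h2, h3⟩
  exact ⟨Finset.mem_image_of_mem _ h1, Finset.mem_image_of_mem _ h2, adj2_swap h3⟩

lemma swap_mem_iff {P : Finset (ℕ × ℕ)} {c : ℕ × ℕ} :
    c ∈ P.image Prod.swap ↔ c.swap ∈ P := by
  constructor
  · intro h
    obtain ⟨c', hc', rfl⟩ := Finset.mem_image.1 h
    simpa using hc'
  · intro h
    have := Finset.mem_image_of_mem Prod.swap h
    simpa using this

/-- row interval version, by transposing -/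
lemma row_interval {b k : ℕ} {P : Finset (ℕ × ℕ)}
    (hconn : Connected2 P) (hroot : (0, 0) ∈ P)
    (hbound : ∀ c ∈ P, c.1 < b ∧ c.2 < k)
    (hrows : ∀ i < b, ∃ c ∈ P, c.1 = i)
    (hcols : ∀ j < k, ∃ c ∈ P, c.2 = j)
    (hcard : P.card = b + k - 1) :
    ∀ j1 j2 j i, (i, j1) ∈ P → (i, j2) ∈ P → j1 ≤ j → j ≤ j2 → (i, j) ∈ P := by
  intro j1 j2 j i h1 h2 hle1 hle2
  set Psw := P.image Prod.swap with hPsw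
  have hconn' : Connected2 Psw := connected2_image_swap hconn
  have hroot' : (0, 0) ∈ Psw := swap_mem_iff.2 hroot
  have hbound' : ∀ c ∈ Psw, c.1 < k ∧ c.2 < b := by
    intro c hc
    have := hbound _ (swap_mem_iff.1 hc)
    exact ⟨this.2, this.1⟩
  have hrows' : ∀ j' < k, ∃ c ∈ Psw, c.1 = j' := by
    intro j' hj'
    obtain ⟨c, hc, hc2⟩ := hcols j' hj'
    exact ⟨c.swap, swap_mem_iff.2 (by simpa using hc), hc2⟩
  have hcols' : ∀ i' < b, ∃ c ∈ Psw, c.2 = i' := by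
    intro i' hi'
    obtain ⟨c, hc, hc1⟩ := hrows i' hi'
    exact ⟨c.swap, swap_mem_iff.2 (by simpa using hc), hc1⟩
  have hcard' : Psw.card = k + b - 1 := by
    rw [hPsw, Finset.card_image_of_injective _ Prod.swap_injective, hcard]
    omega
  have := col_interval hconn' hroot' hbound' hrows' hcols' hcard' j1 j2 j i
    (swap_mem_iff.2 (by simpa using h1)) (swap_mem_iff.2 (by simpa using h2)) hle1 hle2
  have h3 := swap_mem_iff.1 this
  simpa using h3

/-- exactly one horizontal adjacency at each column cut -/
lemma cut_unique {b k : ℕ} {P : Finset (ℕ × ℕ)}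
    (hconn : Connected2 P) (hroot : (0, 0) ∈ P)
    (hbound : ∀ c ∈ P, c.1 < b ∧ c.2 < k)
    (hrows : ∀ i < b, ∃ c ∈ P, c.1 = i)
    (hcols : ∀ j < k, ∃ c ∈ P, c.2 = j)
    (hcard : P.card = b + k - 1) :
    ∀ j, j + 1 < k → ∀ i i', (i, j) ∈ P → (i, j + 1) ∈ P → (i', j) ∈ P →
      (i', j + 1) ∈ P → i = i' := by
  classical
  have hb : 1 ≤ b := by have := (hbound _ hroot).1; omega
  have hri := row_interval hconn hroot hbound hrows hcols hcard
  set Eh := P.filter (fun x => (x.1, x.2 + 1) ∈ P) with hEh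
  -- row fibers
  set row : ℕ → Finset (ℕ × ℕ) := fun i => P.filter (fun c => c.1 = i) with hrow
  have hEhrow : ∀ i ∈ Finset.range b, (Eh.filter (fun x => x.1 = i)).card + 1 = (row i).card := by
    intro i hi
    set colsi := (row i).image Prod.snd with hcolsi
    have hmemcol : ∀ j', j' ∈ colsi ↔ (i, j') ∈ P := by
      intro j'
      constructor
      · intro h
        obtain ⟨c, hc, hc2⟩ := Finset.mem_image.1 h
        have : c = (i, j') := Prod.ext (Finset.mem_filter.1 hc).2 hc2
        rw [← this]; exact (Finset.mem_filter.1 hc).1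
      · intro h
        exact Finset.mem_image.2 ⟨(i, j'), Finset.mem_filter.2 ⟨h, rfl⟩, rfl⟩
    obtain ⟨c0, hc0, hc02⟩ := hrows i (Finset.mem_range.1 hi)
    have hcne : colsi.Nonempty := ⟨c0.2, (hmemcol c0.2).2 (by rw [← hc02]; exact hc0)⟩
    set Mx := colsi.max' hcne with hMx
    have hrowcard : (row i).card = colsi.card := by
      symm
      apply Finset.card_image_of_injOn
      intro c hc c' hc' hcc
      exact Prod.ext ((Finset.mem_filter.1 hc).2.trans (Finset.mem_filter.1 hc').2.symm) hcc
    have himg : (Eh.filter (fun x => x.1 = i)).image Prod.snd = colsi.erase Mx := by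
      apply Finset.Subset.antisymm
      · intro j' hj'
        obtain ⟨x, hx, hx2⟩ := Finset.mem_image.1 hj'
        rw [Finset.mem_filter] at hx
        obtain ⟨hxEh, hxi⟩ := hx
        rw [hEh, Finset.mem_filter] at hxEh
        have hx1 : (i, j') ∈ P := by
          have : x = (i, j') := Prod.ext hxi hx2
          rw [← this]; exact hxEh.1
        have hx1' : (i, j' + 1) ∈ P := by
          have : (x.1, x.2 + 1) = (i, j' + 1) := by rw [hxi, hx2]
          rw [← this]; exact hxEh.2
        have h2 : j' + 1 ∈ colsi := (hmemcol _).2 hx1'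
        have := Finset.le_max' _ _ h2
        exact Finset.mem_erase.2 ⟨by omega, (hmemcol _).2 hx1⟩
      · intro j' hj'
        obtain ⟨hne, hj'c⟩ := Finset.mem_erase.1 hj'
        have hjM : j' < Mx := lt_of_le_of_ne (Finset.le_max' _ _ hj'c) hne
        have hMc : (i, Mx) ∈ P := (hmemcol _).1 (colsi.max'_mem hcne)
        have hsucc : (i, j' + 1) ∈ P := hri j' Mx (j' + 1) i ((hmemcol _).1 hj'c) hMc
          (by omega) (by omega)
        refine Finset.mem_image.2 ⟨(i, j'), ?_, rfl⟩
        rw [Finset.mem_filter, hEh, Finset.mem_filter]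
        exact ⟨⟨(hmemcol _).1 hj'c, hsucc⟩, rfl⟩
    have hinj : ((Eh.filter (fun x => x.1 = i))).card
        = ((Eh.filter (fun x => x.1 = i)).image Prod.snd).card := by
      symm
      apply Finset.card_image_of_injOn
      intro c hc c' hc' hcc
      exact Prod.ext ((Finset.mem_filter.1 hc).2.trans (Finset.mem_filter.1 hc').2.symm) hcc
    rw [hinj, himg, Finset.card_erase_of_mem (colsi.max'_mem hcne), hrowcard]
    have : 0 < colsi.card := Finset.card_pos.2 hcne
    omega
  have hrowsum : ∑ i ∈ Finset.range b, (row i).card = b + k - 1 := by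
    rw [← hcard]
    symm
    apply Finset.card_eq_sum_card_fiberwise
    intro x hx
    exact Finset.mem_range.2 (hbound x hx).1
  have hEhsum1 : Eh.card = ∑ i ∈ Finset.range b, (Eh.filter (fun x => x.1 = i)).card := by
    apply Finset.card_eq_sum_card_fiberwise
    intro x hx
    rw [hEh, Finset.mem_coe, Finset.mem_filter] at hx
    exact Finset.mem_range.2 (hbound _ hx.1).1
  have hEhcard : Eh.card = k - 1 := by
    have h1 : ∑ i ∈ Finset.range b, ((Eh.filter (fun x => x.1 = i)).card + 1)
        = b + k - 1 := by
      rw [← hrowsum]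
      exact Finset.sum_congr rfl hEhrow
    rw [Finset.sum_add_distrib] at h1
    simp at h1
    omega
  -- column-cut fibers
  have hEhsum2 : Eh.card = ∑ j ∈ Finset.range (k-1), (Eh.filter (fun x => x.2 = j)).card := by
    apply Finset.card_eq_sum_card_fiberwise
    intro x hx
    rw [hEh, Finset.mem_coe, Finset.mem_filter] at hx
    have := (hbound _ hx.2).2
    exact Finset.mem_range.2 (by omega)
  have hfib1 : ∀ j ∈ Finset.range (k-1), 1 ≤ (Eh.filter (fun x => x.2 = j)).card := by
    intro j hj
    rw [Finset.mem_range] at hj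
    obtain ⟨z, hz, hz2⟩ := hcols (j+1) (by omega)
    obtain ⟨i0, hi0, hi0'⟩ := cut_nonempty hconn ⟨(0,0), hroot, rfl⟩ (j := j) ⟨z, hz, by omega⟩
    refine Finset.card_pos.2 ⟨(i0, j), by
      rw [Finset.mem_filter, hEh, Finset.mem_filter]
      exact ⟨⟨hi0, hi0'⟩, rfl⟩⟩
  have hfibeq : ∀ j ∈ Finset.range (k-1), (Eh.filter (fun x => x.2 = j)).card = 1 := by
    intro j hj
    by_contra hne
    have hlt : 1 < (Eh.filter (fun x => x.2 = j)).card :=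
      lt_of_le_of_ne (hfib1 j hj) (Ne.symm hne)
    have : ∑ j ∈ Finset.range (k-1), 1
        < ∑ j ∈ Finset.range (k-1), (Eh.filter (fun x => x.2 = j)).card :=
      Finset.sum_lt_sum hfib1 ⟨j, hj, hlt⟩
    simp at this
    omega
  intro j hjk i i' h1 h2 h3 h4
  by_contra hne
  have hm1 : (i, j) ∈ Eh.filter (fun x => x.2 = j) := by
    rw [Finset.mem_filter, hEh, Finset.mem_filter]
    exact ⟨⟨h1, h2⟩, rfl⟩
  have hm2 : (i', j) ∈ Eh.filter (fun x => x.2 = j) := by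
    rw [Finset.mem_filter, hEh, Finset.mem_filter]
    exact ⟨⟨h3, h4⟩, rfl⟩
  have : 1 < (Eh.filter (fun x => x.2 = j)).card :=
    Finset.one_lt_card.2 ⟨_, hm1, _, hm2, fun h => hne (by simpa using congrArg Prod.fst h)⟩
  have := hfibeq j (Finset.mem_range.2 (by omega))
  omega

/-- exactly one vertical adjacency at each row cut, by transposing -/
lemma cut_unique_row {b k : ℕ} {P : Finset (ℕ × ℕ)}
    (hconn : Connected2 P) (hroot : (0, 0) ∈ P)
    (hbound : ∀ c ∈ P, c.1 < b ∧ c.2 < k)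
    (hrows : ∀ i < b, ∃ c ∈ P, c.1 = i)
    (hcols : ∀ j < k, ∃ c ∈ P, c.2 = j)
    (hcard : P.card = b + k - 1) :
    ∀ i, i + 1 < b → ∀ j j', (i, j) ∈ P → (i + 1, j) ∈ P → (i, j') ∈ P →
      (i + 1, j') ∈ P → j = j' := by
  intro i hib j j' h1 h2 h3 h4
  set Psw := P.image Prod.swap with hPsw
  have hconn' : Connected2 Psw := connected2_image_swap hconn
  have hroot' : (0, 0) ∈ Psw := swap_mem_iff.2 hroot
  have hbound' : ∀ c ∈ Psw, c.1 < k ∧ c.2 < b := by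
    intro c hc
    have := hbound _ (swap_mem_iff.1 hc)
    exact ⟨this.2, this.1⟩
  have hrows' : ∀ j' < k, ∃ c ∈ Psw, c.1 = j' := by
    intro t ht
    obtain ⟨c, hc, hc2⟩ := hcols t ht
    exact ⟨c.swap, swap_mem_iff.2 (by simpa using hc), hc2⟩
  have hcols' : ∀ i' < b, ∃ c ∈ Psw, c.2 = i' := by
    intro t ht
    obtain ⟨c, hc, hc1⟩ := hrows t ht
    exact ⟨c.swap, swap_mem_iff.2 (by simpa using hc), hc1⟩
  have hcard' : Psw.card = k + b - 1 := by
    rw [hPsw, Finset.card_image_of_injective _ Prod.swap_injective, hcard]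
    omega
  exact cut_unique hconn' hroot' hbound' hrows' hcols' hcard' i hib j j'
    (swap_mem_iff.2 (by simpa using h1)) (swap_mem_iff.2 (by simpa using h2))
    (swap_mem_iff.2 (by simpa using h3)) (swap_mem_iff.2 (by simpa using h4))

lemma adj2_origin {y : ℕ × ℕ} (h : Adj2 (0, 0) y) : y = (0, 1) ∨ y = (1, 0) := by
  obtain ⟨y1, y2⟩ := y
  rcases h with ⟨h1, h2⟩ | ⟨h1, h2⟩
  · simp only [Prod.mk.injEq] at *
    omega
  · simp only [Prod.mk.injEq] at *
    omega

/-- removing a leaf preserves connectivity -/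
lemma connected2_erase_leaf {P : Finset (ℕ × ℕ)} (hconn : Connected2 P)
    (z w : ℕ × ℕ) (huniq : ∀ y ∈ P, Adj2 z y → y = w) :
    Connected2 (P.erase z) := by
  intro a ha b hb
  have haP := Finset.mem_of_mem_erase ha
  have hbP := Finset.mem_of_mem_erase hb
  have haz := Finset.ne_of_mem_erase ha
  have hbz := Finset.ne_of_mem_erase hb
  set g : ℕ × ℕ → ℕ × ℕ := fun x => if x = z then w else x with hg
  have key : ∀ {u v : ℕ × ℕ},
      Relation.ReflTransGen (fun u v => u ∈ P ∧ v ∈ P ∧ Adj2 u v) u v →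
      Relation.ReflTransGen (fun u v => u ∈ P.erase z ∧ v ∈ P.erase z ∧ Adj2 u v) (g u) (g v) := by
    intro u v h
    induction h with
    | refl => exact Relation.ReflTransGen.refl
    | @tail y c hyc hstep ih =>
      refine ih.trans ?_
      obtain ⟨hyP, hcP, hadj⟩ := hstep
      by_cases hy : y = z <;> by_cases hc : c = z
      · rw [hg]; simp only [if_pos hy, if_pos hc, ite_self]
        exact Relation.ReflTransGen.refl
      · have hcw : c = w := huniq c hcP (hy ▸ hadj)
        rw [hg]; simp only [if_pos hy, if_neg hc, hcw, ite_self]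
        exact Relation.ReflTransGen.refl
      · have hyw : y = w := huniq y hyP (adj2_symm (hc ▸ hadj))
        rw [hg]; simp only [if_pos hc, if_neg hy, hyw, ite_self]
        exact Relation.ReflTransGen.refl
      · refine Relation.ReflTransGen.single ?_
        rw [hg]; simp only [if_neg hy, if_neg hc]
        exact ⟨Finset.mem_erase.2 ⟨hy, hyP⟩, Finset.mem_erase.2 ⟨hc, hcP⟩, hadj⟩
  have h := key (hconn a haP b hbP)
  rw [hg] at h
  simpa [if_neg haz, if_neg hbz] using h

/-- adding a leaf preserves connectivity -/
lemma connected2_insert_leaf {P : Finset (ℕ × ℕ)} (hconn : Connected2 P)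
    (z w : ℕ × ℕ) (hw : w ∈ P) (hadj : Adj2 z w) :
    Connected2 (insert z P) := by
  have hmono : ∀ {u v : ℕ × ℕ},
      Relation.ReflTransGen (fun u v => u ∈ P ∧ v ∈ P ∧ Adj2 u v) u v →
      Relation.ReflTransGen (fun u v => u ∈ insert z P ∧ v ∈ insert z P ∧ Adj2 u v) u v := by
    intro u v h
    refine Relation.ReflTransGen.mono ?_ _ _ h
    rintro x y ⟨h1, h2, h3⟩
    exact ⟨Finset.mem_insert_of_mem h1, Finset.mem_insert_of_mem h2, h3⟩
  have hstep : Relation.ReflTransGen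
      (fun u v => u ∈ insert z P ∧ v ∈ insert z P ∧ Adj2 u v) z w :=
    Relation.ReflTransGen.single ⟨Finset.mem_insert_self _ _, Finset.mem_insert_of_mem hw, hadj⟩
  intro a ha b hb
  rcases Finset.mem_insert.1 ha with rfl | haP <;> rcases Finset.mem_insert.1 hb with rfl | hbP
  · exact Relation.ReflTransGen.refl
  · exact hstep.trans (hmono (hconn w hw b hbP))
  · refine (hmono (hconn a haP w hw)).trans ?_
    refine Relation.ReflTransGen.single ?_
    exact ⟨Finset.mem_insert_of_mem hw, Finset.mem_insert_self _ _, adj2_symm hadj⟩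
  · exact hmono (hconn a haP b hbP)

/-- image under an adjacency-preserving map is connected -/
lemma connected2_image {P : Finset (ℕ × ℕ)} (hconn : Connected2 P)
    (f : ℕ × ℕ → ℕ × ℕ) (hf : ∀ u ∈ P, ∀ v ∈ P, Adj2 u v → Adj2 (f u) (f v)) :
    Connected2 (P.image f) := by
  intro a ha b hb
  obtain ⟨a', ha', rfl⟩ := Finset.mem_image.1 ha
  obtain ⟨b', hb', rfl⟩ := Finset.mem_image.1 hb
  refine Relation.ReflTransGen.lift f ?_ _ _ (hconn a' ha' b' hb')
  rintro u v ⟨h1, h2, h3⟩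
  exact ⟨Finset.mem_image_of_mem _ h1, Finset.mem_image_of_mem _ h2, hf u h1 v h2 h3⟩

/-- chain along a full row prefix -/
lemma chain_row_prefix {P : Finset (ℕ × ℕ)} (j : ℕ) (h : ∀ t ≤ j, (0, t) ∈ P) :
    Relation.ReflTransGen (fun u v => u ∈ P ∧ v ∈ P ∧ Adj2 u v) (0, j) (0, 0) := by
  induction j with
  | zero => exact Relation.ReflTransGen.refl
  | succ j ih =>
    refine Relation.ReflTransGen.head ?_ (ih fun t ht => h t (by omega))
    exact ⟨h (j+1) le_rfl, h j (by omega), Or.inl ⟨rfl, Or.inr rfl⟩⟩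

lemma chain_col_prefix {P : Finset (ℕ × ℕ)} (i : ℕ) (h : ∀ t ≤ i, (t, 0) ∈ P) :
    Relation.ReflTransGen (fun u v => u ∈ P ∧ v ∈ P ∧ Adj2 u v) (i, 0) (0, 0) := by
  induction i with
  | zero => exact Relation.ReflTransGen.refl
  | succ i ih =>
    refine Relation.ReflTransGen.head ?_ (ih fun t ht => h t (by omega))
    exact ⟨h (i+1) le_rfl, h i (by omega), Or.inr ⟨rfl, Or.inr rfl⟩⟩

lemma rel_symm {P : Finset (ℕ × ℕ)} :
    Symmetric (fun u v => u ∈ P ∧ v ∈ P ∧ Adj2 u v) := by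
  rintro u v ⟨h1, h2, h3⟩
  exact ⟨h2, h1, adj2_symm h3⟩

def rowShape (k : ℕ) : Finset (ℕ × ℕ) := (Finset.range k).image (fun j => (0, j))

def Lshape (b k : ℕ) : Finset (ℕ × ℕ) :=
  rowShape k ∪ (Finset.Ico 1 b).image (fun i => (i, 0))

lemma mem_rowShape {k : ℕ} {c : ℕ × ℕ} : c ∈ rowShape k ↔ c.1 = 0 ∧ c.2 < k := by
  unfold rowShape
  simp only [Finset.mem_image, Finset.mem_range]
  constructor
  · rintro ⟨j, hj, rfl⟩; exact ⟨rfl, hj⟩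
  · rintro ⟨h1, h2⟩; exact ⟨c.2, h2, Prod.ext h1.symm rfl⟩

lemma mem_Lshape {b k : ℕ} {c : ℕ × ℕ} :
    c ∈ Lshape b k ↔ (c.1 = 0 ∧ c.2 < k) ∨ (c.2 = 0 ∧ 1 ≤ c.1 ∧ c.1 < b) := by
  unfold Lshape
  simp only [Finset.mem_union, mem_rowShape, Finset.mem_image, Finset.mem_Ico]
  constructor
  · rintro (h | ⟨i, hi, rfl⟩)
    · exact Or.inl h
    · exact Or.inr ⟨rfl, hi.1, hi.2⟩
  · rintro (h | ⟨h1, h2⟩)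
    · exact Or.inl h
    · exact Or.inr ⟨c.1, ⟨h2.1, h2.2⟩, Prod.ext rfl h1.symm⟩

lemma rowShape_card {k : ℕ} : (rowShape k).card = k := by
  unfold rowShape
  rw [Finset.card_image_of_injective _ (fun a b h => by simpa using h)]
  simp

lemma Lshape_card {b k : ℕ} : (Lshape b k).card = k + (b - 1) := by
  unfold Lshape
  rw [Finset.card_union_of_disjoint, rowShape_card,
    Finset.card_image_of_injective _ (fun a b h => by simpa using h)]
  · simp
  · rw [Finset.disjoint_left]
    intro c hc hc'
    obtain ⟨i, hi, rfl⟩ := Finset.mem_image.1 hc'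
    rw [mem_rowShape] at hc
    simp at hc
    rw [Finset.mem_Ico] at hi
    omega

lemma connected2_Lshape {b k : ℕ} (hk : 1 ≤ k) : Connected2 (Lshape b k) := by
  have hchain : ∀ c ∈ Lshape b k, Relation.ReflTransGen
      (fun u v => u ∈ Lshape b k ∧ v ∈ Lshape b k ∧ Adj2 u v) c (0, 0) := by
    intro c hc
    rcases mem_Lshape.1 hc with ⟨h1, h2⟩ | ⟨h1, h2⟩
    · have : c = (0, c.2) := Prod.ext h1 rfl
      rw [this]
      exact chain_row_prefix c.2 (fun t ht => mem_Lshape.2 (Or.inl ⟨rfl, by omega⟩))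
    · have : c = (c.1, 0) := Prod.ext rfl h1
      rw [this]
      refine chain_col_prefix c.1 (fun t ht => mem_Lshape.2 ?_)
      rcases Nat.eq_zero_or_pos t with h | h
      · exact Or.inl ⟨h, by omega⟩
      · exact Or.inr ⟨rfl, by omega⟩
  intro a ha b hb
  exact (hchain a ha).trans ((@Relation.ReflTransGen.symmetric _ _ ⟨fun _ _ h => rel_symm h⟩).symm _ _ (hchain b hb))

lemma connected2_rowShape {k : ℕ} : Connected2 (rowShape k) := by
  have hchain : ∀ c ∈ rowShape k, Relation.ReflTransGen
      (fun u v => u ∈ rowShape k ∧ v ∈ rowShape k ∧ Adj2 u v) c (0, 0) := by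
    intro c hc
    obtain ⟨h1, h2⟩ := mem_rowShape.1 hc
    have : c = (0, c.2) := Prod.ext h1 rfl
    rw [this]
    exact chain_row_prefix c.2 (fun t ht => mem_rowShape.2 ⟨rfl, by omega⟩)
  intro a ha b hb
  exact (hchain a ha).trans ((@Relation.ReflTransGen.symmetric _ _ ⟨fun _ _ h => rel_symm h⟩).symm _ _ (hchain b hb))

lemma cp_finite (b k : ℕ) : {P : Finset (ℕ × ℕ) | CornerPoly b k P}.Finite := by
  apply Set.Finite.subset ((Finset.range b ×ˢ Finset.range k).powerset.finite_toSet)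
  intro P hP
  obtain ⟨_, _, ⟨hbound, _⟩, _, _⟩ := hP
  simp only [Finset.coe_powerset, Set.mem_preimage, Set.mem_powerset_iff]
  intro c hc
  have := hbound c hc
  simp only [Finset.coe_product, Set.mem_prod, Finset.mem_coe, Finset.mem_range]
  exact this

lemma cp_occupied {b k : ℕ} {P : Finset (ℕ × ℕ)} (h : CornerPoly b k P) :
    (∀ i < b, ∃ c ∈ P, c.1 = i) ∧ (∀ j < k, ∃ c ∈ P, c.2 = j) := by
  obtain ⟨hne, hconn, ⟨hbound, hx0, hxb, hy0, hyk⟩, hcard, hroot⟩ := h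
  exact ⟨fun i hi => rows_occupied hconn hx0 hxb i hi,
    fun j hj => cols_occupied hconn hy0 hyk j hj⟩

lemma cp_one {k : ℕ} (hk : 1 ≤ k) :
    {P : Finset (ℕ × ℕ) | CornerPoly 1 k P} = {rowShape k} := by
  ext P
  simp only [Set.mem_setOf_eq, Set.mem_singleton_iff]
  constructor
  · intro h
    have hcols := (cp_occupied h).2
    obtain ⟨hne, hconn, ⟨hbound, hx0, hxb, hy0, hyk⟩, hcard, hroot⟩ := h
    have hsub : rowShape k ⊆ P := by
      intro c hc
      obtain ⟨h1, h2⟩ := mem_rowShape.1 hc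
      obtain ⟨x, hx, hx2⟩ := hcols c.2 h2
      have : x = c := by
        have := (hbound x hx).1
        exact Prod.ext (by omega) hx2
      rw [← this]; exact hx
    symm
    apply Finset.eq_of_subset_of_card_le hsub
    rw [hcard, rowShape_card]
    omega
  · rintro rfl
    refine ⟨⟨(0,0), mem_rowShape.2 ⟨rfl, by omega⟩⟩, connected2_rowShape, ⟨?_, ?_, ?_, ?_, ?_⟩,
      by rw [rowShape_card]; omega, mem_rowShape.2 ⟨rfl, by omega⟩⟩
    · intro c hc
      obtain ⟨h1, h2⟩ := mem_rowShape.1 hc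
      omega
    · exact ⟨(0,0), mem_rowShape.2 ⟨rfl, by omega⟩, rfl⟩
    · exact ⟨(0,0), mem_rowShape.2 ⟨rfl, by omega⟩, rfl⟩
    · exact ⟨(0,0), mem_rowShape.2 ⟨rfl, by omega⟩, rfl⟩
    · exact ⟨(0,k-1), mem_rowShape.2 ⟨rfl, by omega⟩, rfl⟩

lemma cp_swap_mem {b k : ℕ} {P : Finset (ℕ × ℕ)} (h : CornerPoly b k P) :
    CornerPoly k b (P.image Prod.swap) := by
  obtain ⟨hne, hconn, ⟨hbound, hx0, hxb, hy0, hyk⟩, hcard, hroot⟩ := h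
  refine ⟨hne.image _, connected2_image_swap hconn, ⟨?_, ?_, ?_, ?_, ?_⟩, ?_, ?_⟩
  · intro c hc
    have := hbound _ (swap_mem_iff.1 hc)
    exact ⟨this.2, this.1⟩
  · obtain ⟨c, hc, h2⟩ := hy0
    exact ⟨c.swap, swap_mem_iff.2 (by simpa using hc), h2⟩
  · obtain ⟨c, hc, h2⟩ := hyk
    exact ⟨c.swap, swap_mem_iff.2 (by simpa using hc), h2⟩
  · obtain ⟨c, hc, h2⟩ := hx0
    exact ⟨c.swap, swap_mem_iff.2 (by simpa using hc), h2⟩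
  · obtain ⟨c, hc, h2⟩ := hxb
    exact ⟨c.swap, swap_mem_iff.2 (by simpa using hc), h2⟩
  · rw [Finset.card_image_of_injective _ Prod.swap_injective, hcard]; omega
  · exact swap_mem_iff.2 hroot

lemma swap_swap_image (P : Finset (ℕ × ℕ)) : (P.image Prod.swap).image Prod.swap = P := by
  rw [Finset.image_image]
  simp

/-- Case D: if both neighbours of the corner are present, P is the L-shape. -/
lemma caseD {b k : ℕ} {P : Finset (ℕ × ℕ)} (hb : 2 ≤ b) (hk : 2 ≤ k)
    (h : CornerPoly b k P) (h01 : (0,1) ∈ P) (h10 : (1,0) ∈ P) : P = Lshape b k := by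
  have hocc := cp_occupied h
  obtain ⟨hne, hconn, ⟨hbound, hx0, hxb, hy0, hyk⟩, hcard, hroot⟩ := h
  obtain ⟨hrows, hcols⟩ := hocc
  have CI := col_interval hconn hroot hbound hrows hcols hcard
  have RI := row_interval hconn hroot hbound hrows hcols hcard
  have CU := cut_unique hconn hroot hbound hrows hcols hcard
  have claim : ∀ j, 1 ≤ j → j < k → ∀ i, ((i, j) ∈ P ↔ i = 0) := by
    intro j hj
    induction j, hj using Nat.le_induction with
    | base =>
      intro hjk i
      constructor
      · intro hij
        by_contra hi0
        have hi1 : 1 ≤ i := by omega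
        have h11 : (1, 1) ∈ P := CI 0 i 1 1 h01 hij (by omega) hi1
        have := CU 0 (by omega) 0 1 hroot h01 h10 h11
        omega
      · rintro rfl; exact h01
    | succ j hj ih =>
      intro hjk i
      have hjk' : j < k := by omega
      have ihj := ih hjk'
      have h0j1 : (0, j + 1) ∈ P := by
        obtain ⟨z, hz, hz2⟩ := hcols (j+1) hjk
        obtain ⟨i0, hi0, hi0'⟩ := cut_nonempty hconn ⟨(0,0), hroot, rfl⟩ (j := j)
          ⟨z, hz, by omega⟩
        have : i0 = 0 := (ihj i0).1 hi0
        rw [← this]; exact hi0'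
      constructor
      · intro hij
        by_contra hi0
        have hi1 : 1 ≤ i := by omega
        have h1j1 : (1, j + 1) ∈ P := CI 0 i 1 (j+1) h0j1 hij (by omega) hi1
        have h1j : (1, j) ∈ P := RI 0 (j+1) j 1 h10 h1j1 (by omega) (by omega)
        have := (ihj 1).1 h1j
        omega
      · rintro rfl; exact h0j1
  have hLsub : Lshape b k ⊆ P := by
    intro c hc
    rcases mem_Lshape.1 hc with ⟨h1, h2⟩ | ⟨h1, h2⟩
    · rcases Nat.eq_zero_or_pos c.2 with h3 | h3
      · have : c = (0, 0) := Prod.ext h1 h3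
        rw [this]; exact hroot
      · have : c = (0, c.2) := Prod.ext h1 rfl
        rw [this]
        exact (claim c.2 h3 h2 0).2 rfl
    · obtain ⟨x, hx, hx1⟩ := hrows c.1 h2.2
      have hx2 : x.2 = 0 := by
        by_contra h4
        have h5 : 1 ≤ x.2 := by omega
        have := (claim x.2 h5 (hbound _ hx).2 x.1).1 (by rw [← Prod.mk.eta (p := x)]; exact hx)
        omega
      have : x = c := Prod.ext (by omega) (by omega)
      rw [← this]; exact hx
  symm
  apply Finset.eq_of_subset_of_card_le hLsub
  rw [hcard, Lshape_card]
  omega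

lemma cp_Lshape {b k : ℕ} (hb : 1 ≤ b) (hk : 1 ≤ k) : CornerPoly b k (Lshape b k) := by
  have hroot : (0,0) ∈ Lshape b k := mem_Lshape.2 (Or.inl ⟨rfl, by omega⟩)
  refine ⟨⟨(0,0), hroot⟩, connected2_Lshape hk, ⟨?_, ⟨(0,0), hroot, rfl⟩, ?_, ⟨(0,0), hroot, rfl⟩,
    ⟨(0, k-1), mem_Lshape.2 (Or.inl ⟨rfl, by omega⟩), rfl⟩⟩, by rw [Lshape_card]; omega, hroot⟩
  · intro c hc
    rcases mem_Lshape.1 hc with ⟨h1, h2⟩ | ⟨h1, h2⟩ <;> omega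
  · rcases eq_or_lt_of_le hb with h | h
    · exact ⟨(0,0), hroot, by omega⟩
    · exact ⟨(b-1, 0), mem_Lshape.2 (Or.inr ⟨rfl, by omega, by omega⟩), rfl⟩

/-- every corner polyomino with k ≥ 2 contains a neighbour of the corner -/
lemma first_step {b k : ℕ} {P : Finset (ℕ × ℕ)} (hk : 2 ≤ k) (h : CornerPoly b k P) :
    (0, 1) ∈ P ∨ (1, 0) ∈ P := by
  obtain ⟨hne, hconn, ⟨hbound, hx0, hxb, hy0, hyk⟩, hcard, hroot⟩ := h
  obtain ⟨c, hc, hc2⟩ := hyk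
  have hcne : c ≠ (0, 0) := by
    intro h
    rw [h] at hc2
    simp at hc2
    omega
  rcases (hconn (0,0) hroot c hc).cases_head with h | ⟨y, ⟨_, hy2, hy3⟩, _⟩
  · exact absurd h.symm hcne
  · rcases adj2_origin hy3 with rfl | rfl
    · exact Or.inl hy2
    · exact Or.inr hy2

/-- Case B bijection: corner polys containing (1,0) but not (0,1) correspond to
corner polys of the (b-1) × k rectangle. -/
lemma caseB_ncard {b k : ℕ} (hb : 2 ≤ b) (hk : 1 ≤ k) :
    {P : Finset (ℕ × ℕ) | CornerPoly b k P ∧ (1,0) ∈ P ∧ (0,1) ∉ P}.ncard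
      = {Q : Finset (ℕ × ℕ) | CornerPoly (b-1) k Q}.ncard := by
  classical
  set dn : ℕ × ℕ → ℕ × ℕ := fun c => (c.1 - 1, c.2) with hdn
  set up : ℕ × ℕ → ℕ × ℕ := fun c => (c.1 + 1, c.2) with hup
  set F : Finset (ℕ × ℕ) → Finset (ℕ × ℕ) := fun P => (P.erase (0,0)).image dn with hF
  set G : Finset (ℕ × ℕ) → Finset (ℕ × ℕ) := fun Q => insert (0,0) (Q.image up) with hG
  set SB := {P : Finset (ℕ × ℕ) | CornerPoly b k P ∧ (1,0) ∈ P ∧ (0,1) ∉ P} with hSB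
  set CP' := {Q : Finset (ℕ × ℕ) | CornerPoly (b-1) k Q} with hCP'
  -- facts about members of SB
  have hfst : ∀ P ∈ SB, ∀ c ∈ P.erase (0,0), 1 ≤ c.1 := by
    intro P hP c hc
    obtain ⟨hcp, h10, h01⟩ := hP
    have hocc := cp_occupied hcp
    obtain ⟨hne, hconn, ⟨hbound, hx0, hxb, hy0, hyk⟩, hcard, hroot⟩ := hcp
    have RI := row_interval hconn hroot hbound hocc.1 hocc.2 hcard
    have hrow0 : ∀ j, (0, j) ∈ P → j = 0 := by
      intro j hj
      by_contra h
      exact h01 (RI 0 j 1 0 hroot hj (by omega) (by omega))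
    have hcP := Finset.mem_of_mem_erase hc
    have hcne := Finset.ne_of_mem_erase hc
    by_contra h
    have h1 : c.1 = 0 := by omega
    have : c = (0, c.2) := Prod.ext h1 rfl
    rw [this] at hcP
    exact hcne (by rw [this, hrow0 c.2 hcP])
  have hGF : ∀ P ∈ SB, G (F P) = P := by
    intro P hP
    have hroot : (0,0) ∈ P := hP.1.2.2.2.2
    rw [hG, hF]
    simp only
    rw [Finset.image_image]
    have : (P.erase (0,0)).image (up ∘ dn) = P.erase (0,0) := by
      rw [show up ∘ dn = fun c => (c.1 - 1 + 1, c.2) from rfl]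
      rw [Finset.image_congr (g := id) ?_, Finset.image_id]
      intro c hc
      have := hfst P hP c hc
      exact Prod.ext (by simp; omega) rfl
    rw [this, Finset.insert_erase hroot]
  have hto : ∀ P ∈ SB, F P ∈ CP' := by
    intro P hP
    obtain ⟨hcp, h10, h01⟩ := hP
    have hocc := cp_occupied hcp
    have hfst' := hfst P ⟨hcp, h10, h01⟩
    obtain ⟨hne, hconn, ⟨hbound, hx0, hxb, hy0, hyk⟩, hcard, hroot⟩ := hcp
    have h10e : (1,0) ∈ P.erase (0,0) := Finset.mem_erase.2 ⟨by simp, h10⟩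
    have h00F : (0,0) ∈ F P := by
      rw [hF]
      exact Finset.mem_image.2 ⟨(1,0), h10e, rfl⟩
    have hcardF : (F P).card = (b-1) + k - 1 := by
      rw [hF]
      simp only
      rw [Finset.card_image_of_injOn, Finset.card_erase_of_mem hroot, hcard]
      · omega
      · intro c hc c' hc' hcc
        have h1 := hfst' c hc
        have h2 := hfst' c' hc'
        rw [hdn] at hcc
        simp only [Prod.mk.injEq] at hcc
        exact Prod.ext (by omega) hcc.2
    have huniq : ∀ y ∈ P, Adj2 (0,0) y → y = (1,0) := by
      intro y hy hadj
      rcases adj2_origin hadj with rfl | rfl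
      · exact absurd hy h01
      · rfl
    have hconnF : Connected2 (F P) := by
      rw [hF]
      apply connected2_image (connected2_erase_leaf hconn (0,0) (1,0) huniq)
      intro u hu v hv hadj
      have h1 := hfst' u hu
      have h2 := hfst' v hv
      rw [hdn]
      unfold Adj2 at hadj ⊢
      simp only
      omega
    refine ⟨⟨(0,0), h00F⟩, hconnF, ⟨?_, ⟨(0,0), h00F, rfl⟩, ?_, ⟨(0,0), h00F, rfl⟩, ?_⟩,
      hcardF, h00F⟩
    · intro c hc
      rw [hF] at hc
      obtain ⟨c', hc', rfl⟩ := Finset.mem_image.1 hc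
      have h1 := hfst' c' hc'
      have h2 := hbound c' (Finset.mem_of_mem_erase hc')
      rw [hdn]
      simp only
      omega
    · obtain ⟨c, hc, hc1⟩ := hxb
      have hcne : c ≠ (0,0) := by
        intro h
        rw [h] at hc1
        simp at hc1
        omega
      refine ⟨dn c, ?_, by rw [hdn]; simp; omega⟩
      rw [hF]
      exact Finset.mem_image.2 ⟨c, Finset.mem_erase.2 ⟨hcne, hc⟩, rfl⟩
    · rcases eq_or_lt_of_le hk with h | h
      · exact ⟨(0,0), h00F, by omega⟩
      · obtain ⟨c, hc, hc2⟩ := hyk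
        have hcne : c ≠ (0,0) := by
          intro heq
          rw [heq] at hc2
          simp at hc2
          omega
        refine ⟨dn c, ?_, by rw [hdn]; simpa using hc2⟩
        rw [hF]
        exact Finset.mem_image.2 ⟨c, Finset.mem_erase.2 ⟨hcne, hc⟩, rfl⟩
  have hfrom : ∀ Q ∈ CP', G Q ∈ SB ∧ F (G Q) = Q := by
    intro Q hQ
    obtain ⟨hne, hconn, ⟨hbound, hx0, hxb, hy0, hyk⟩, hcard, hroot⟩ := hQ
    have hupfst : ∀ x ∈ Q.image up, 1 ≤ x.1 := by
      intro x hx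
      obtain ⟨c, hc, rfl⟩ := Finset.mem_image.1 hx
      rw [hup]
      simp
    have h00n : (0,0) ∉ Q.image up := by
      intro h
      have := hupfst _ h
      simp at this
    have h10m : (1,0) ∈ G Q := by
      rw [hG]
      exact Finset.mem_insert_of_mem (Finset.mem_image.2 ⟨(0,0), hroot, rfl⟩)
    have h01n : (0,1) ∉ G Q := by
      rw [hG]
      intro h
      rcases Finset.mem_insert.1 h with h | h
      · simp at h
      · have := hupfst _ h
        simp at this
    have hFG : F (G Q) = Q := by
      rw [hF, hG]
      simp only
      rw [Finset.erase_insert h00n, Finset.image_image]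
      rw [show dn ∘ up = fun c : ℕ × ℕ => (c.1 + 1 - 1, c.2) from rfl]
      rw [Finset.image_congr (g := id) ?_, Finset.image_id]
      intro c hc
      exact Prod.ext (by simp) rfl
    refine ⟨⟨⟨?_, ?_, ⟨?_, ⟨(0,0), Finset.mem_insert_self _ _, rfl⟩, ?_,
      ⟨(0,0), Finset.mem_insert_self _ _, rfl⟩, ?_⟩, ?_, Finset.mem_insert_self _ _⟩,
      h10m, h01n⟩, hFG⟩
    · exact ⟨(0,0), Finset.mem_insert_self _ _⟩
    · rw [hG]
      apply connected2_insert_leaf _ (0,0) (1,0)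
      · exact Finset.mem_image.2 ⟨(0,0), hroot, rfl⟩
      · exact Or.inr ⟨rfl, Or.inl rfl⟩
      · apply connected2_image hconn
        intro u hu v hv hadj
        rw [hup]
        unfold Adj2 at hadj ⊢
        simp only
        omega
    · intro c hc
      rw [hG] at hc
      rcases Finset.mem_insert.1 hc with rfl | hc
      · constructor <;> omega
      · obtain ⟨c', hc', rfl⟩ := Finset.mem_image.1 hc
        have := hbound c' hc'
        rw [hup]
        constructor
        · simp; omega
        · simp; omega
    · obtain ⟨c, hc, hc1⟩ := hxb
      refine ⟨up c, ?_, ?_⟩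
      · rw [hG]
        exact Finset.mem_insert_of_mem (Finset.mem_image.2 ⟨c, hc, rfl⟩)
      · rw [hup]; simp; omega
    · obtain ⟨c, hc, hc2⟩ := hyk
      refine ⟨up c, ?_, ?_⟩
      · rw [hG]
        exact Finset.mem_insert_of_mem (Finset.mem_image.2 ⟨c, hc, rfl⟩)
      · rw [hup]; simpa using hc2
    · rw [hG, Finset.card_insert_of_notMem h00n,
        Finset.card_image_of_injective _ ?_, hcard]
      · omega
      · intro x y h
        rw [hup] at h
        simp only [Prod.mk.injEq] at h
        exact Prod.ext (by omega) h.2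
  -- conclude
  have hinj : Set.InjOn F SB := by
    intro P hP P' hP' h
    rw [← hGF P hP, ← hGF P' hP', h]
  have himg : F '' SB = CP' := by
    apply Set.Subset.antisymm
    · rintro _ ⟨P, hP, rfl⟩
      exact hto P hP
    · intro Q hQ
      obtain ⟨h1, h2⟩ := hfrom Q hQ
      exact ⟨G Q, h1, h2⟩
  rw [← himg, Set.ncard_image_of_injOn hinj]

lemma cp_ncard_swap (b k : ℕ) :
    {P : Finset (ℕ × ℕ) | CornerPoly b k P}.ncard
      = {P : Finset (ℕ × ℕ) | CornerPoly k b P}.ncard := by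
  have hinj : Function.Injective (fun P : Finset (ℕ × ℕ) => P.image Prod.swap) := by
    intro x y h
    have := congrArg (fun P : Finset (ℕ × ℕ) => P.image Prod.swap) h
    simpa [swap_swap_image] using this
  have himg : {P : Finset (ℕ × ℕ) | CornerPoly k b P}
      = (fun P : Finset (ℕ × ℕ) => P.image Prod.swap) '' {P | CornerPoly b k P} := by
    ext Q
    constructor
    · intro hQ
      exact ⟨Q.image Prod.swap, cp_swap_mem hQ, swap_swap_image Q⟩
    · rintro ⟨P, hP, rfl⟩
      exact cp_swap_mem hP
  rw [himg, Set.ncard_image_of_injective _ hinj]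

theorem corner_poly_count' (b k : ℕ) (hb : 1 ≤ b) (hk : 1 ≤ k) :
    {P : Finset (ℕ × ℕ) | CornerPoly b k P}.ncard =
      2 * Nat.choose (b + k - 2) (b - 1) - 1 := by
  classical
  suffices H : ∀ n b k, 1 ≤ b → 1 ≤ k → b + k = n →
      {P : Finset (ℕ × ℕ) | CornerPoly b k P}.ncard =
        2 * Nat.choose (b + k - 2) (b - 1) - 1 by
    exact H (b + k) b k hb hk rfl
  clear hb hk b k
  intro n
  induction n using Nat.strong_induction_on with
  | _ n ih =>
    intro b k hb hk hn
    rcases eq_or_lt_of_le hb with hb1 | hb2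
    · -- b = 1
      rw [← hb1, cp_one hk, Set.ncard_singleton]
      have h1 : 1 - 1 = 0 := rfl
      rw [h1, Nat.choose_zero_right]
    rcases eq_or_lt_of_le hk with hk1 | hk2
    · -- k = 1
      rw [cp_ncard_swap, ← hk1, cp_one hb, Set.ncard_singleton]
      have h1 : b + 1 - 2 = b - 1 := by omega
      rw [h1, Nat.choose_self]
    -- b, k ≥ 2
    set SB := {P : Finset (ℕ × ℕ) | CornerPoly b k P ∧ (1,0) ∈ P ∧ (0,1) ∉ P} with hSB
    set SC := {P : Finset (ℕ × ℕ) | CornerPoly b k P ∧ (0,1) ∈ P ∧ (1,0) ∉ P} with hSC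
    set SD := {P : Finset (ℕ × ℕ) | CornerPoly b k P ∧ (0,1) ∈ P ∧ (1,0) ∈ P} with hSD
    have hunion : {P : Finset (ℕ × ℕ) | CornerPoly b k P} = (SB ∪ SC) ∪ SD := by
      ext P
      simp only [hSB, hSC, hSD, Set.mem_union, Set.mem_setOf_eq]
      constructor
      · intro h
        have := first_step hk2 h
        by_cases h1 : (0,1) ∈ P <;> by_cases h2 : (1,0) ∈ P <;> tauto
      · tauto
    have hfinB : SB.Finite := (cp_finite b k).subset (fun P hP => hP.1)
    have hfinC : SC.Finite := (cp_finite b k).subset (fun P hP => hP.1)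
    have hfinD : SD.Finite := (cp_finite b k).subset (fun P hP => hP.1)
    have hdisjBC : Disjoint SB SC := by
      rw [Set.disjoint_left]
      rintro P ⟨_, h1, h2⟩ ⟨_, h3, _⟩
      exact h2 h3
    have hdisjD : Disjoint (SB ∪ SC) SD := by
      rw [Set.disjoint_left]
      rintro P (⟨_, _, h2⟩ | ⟨_, _, h2⟩) ⟨_, h3, h4⟩
      · exact h2 h3
      · exact h2 h4
    have hcardD : SD.ncard = 1 := by
      have : SD = {Lshape b k} := by
        ext P
        simp only [hSD, Set.mem_setOf_eq, Set.mem_singleton_iff]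
        constructor
        · rintro ⟨h1, h2, h3⟩
          exact caseD hb2 hk2 h1 h2 h3
        · rintro rfl
          exact ⟨cp_Lshape (by omega) (by omega),
            mem_Lshape.2 (Or.inl ⟨rfl, by omega⟩),
            mem_Lshape.2 (Or.inr ⟨rfl, by omega, by omega⟩)⟩
      rw [this, Set.ncard_singleton]
    have hcardB : SB.ncard = 2 * Nat.choose (b + k - 3) (b - 2) - 1 := by
      rw [hSB, caseB_ncard hb2 hk]
      have := ih ((b-1) + k) (by omega) (b-1) k (by omega) hk rfl
      rw [this]
      have e1 : b - 1 + k - 2 = b + k - 3 := by omega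
      have e2 : b - 1 - 1 = b - 2 := by omega
      rw [e1, e2]
    have hcardC : SC.ncard = 2 * Nat.choose (b + k - 3) (b - 1) - 1 := by
      have himg : (fun P : Finset (ℕ × ℕ) => P.image Prod.swap) '' SC
          = {P : Finset (ℕ × ℕ) | CornerPoly k b P ∧ (1,0) ∈ P ∧ (0,1) ∉ P} := by
        ext Q
        constructor
        · rintro ⟨P, ⟨h1, h2, h3⟩, rfl⟩
          refine ⟨cp_swap_mem h1, ?_, ?_⟩
          · exact swap_mem_iff.2 (by simpa using h2)
          · intro h
            exact h3 (by simpa using swap_mem_iff.1 h)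
        · rintro ⟨h1, h2, h3⟩
          refine ⟨Q.image Prod.swap, ⟨cp_swap_mem h1, ?_, ?_⟩, swap_swap_image Q⟩
          · exact swap_mem_iff.2 (by simpa using h2)
          · intro h
            exact h3 (by simpa using swap_mem_iff.1 h)
      have hinj : Function.Injective (fun P : Finset (ℕ × ℕ) => P.image Prod.swap) := by
        intro x y h
        have := congrArg (fun P : Finset (ℕ × ℕ) => P.image Prod.swap) h
        simpa [swap_swap_image] using this
      have h1 : SC.ncard = {P : Finset (ℕ × ℕ) | CornerPoly k b P ∧ (1,0) ∈ P ∧ (0,1) ∉ P}.ncard := by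
        rw [← himg, Set.ncard_image_of_injective _ hinj]
      rw [h1, caseB_ncard hk2 hb]
      have := ih ((k-1) + b) (by omega) (k-1) b (by omega) hb rfl
      rw [this]
      have hsym : Nat.choose (k - 1 + b - 2) (k - 1 - 1) = Nat.choose (b + k - 3) (b - 1) := by
        have e1 : k - 1 + b - 2 = b + k - 3 := by omega
        have e2 : k - 1 - 1 = k - 2 := by omega
        rw [e1, e2]
        have : b + k - 3 - (k - 2) = b - 1 := by omega
        rw [← this, Nat.choose_symm (by omega)]
      rw [hsym]
    rw [hunion, Set.ncard_union_eq hdisjD (hfinB.union hfinC) hfinD,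
      Set.ncard_union_eq hdisjBC hfinB hfinC, hcardB, hcardC, hcardD]
    have hx : 1 ≤ Nat.choose (b + k - 3) (b - 2) := Nat.choose_pos (by omega)
    have hy : 1 ≤ Nat.choose (b + k - 3) (b - 1) := Nat.choose_pos (by omega)
    have hpascal : Nat.choose (b + k - 2) (b - 1)
        = Nat.choose (b + k - 3) (b - 2) + Nat.choose (b + k - 3) (b - 1) := by
      have e1 : b + k - 2 = (b + k - 3) + 1 := by omega
      have e2 : b - 1 = (b - 2) + 1 := by omega
      rw [e1, e2, Nat.choose_succ_succ]
    rw [hpascal]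
    omega

end CP

/-- The number of 2D corner-polyominoes inscribed in a `b × k` rectangle is
`2 * C(b+k-2, b-1) - 1`. -/
theorem corner_poly_count (b k : ℕ) (hb : 1 ≤ b) (hk : 1 ≤ k) :
    {P : Finset (ℕ × ℕ) | CornerPoly b k P}.ncard =
      2 * Nat.choose (b + k - 2) (b - 1) - 1 := by
  exact CP.corner_poly_count' b k hb hk
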